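/- arXiv:2304.02864 — 2 statements merged into one kernel-verified Lean document; each statement's English description precedes it below -/
import Mathlib

section
/- Assume the girth of X = J(v,k,i) equals 4. Then the odd girth of X equals 2⌈(k − i)/Δ⌉ + 1; that is, X contains an odd cycle of length 2⌈(k − i)/Δ⌉ + 1 and contains no shorter odd cycle. -/
/-- The generalized Johnson graph `J(v,k,i)`: vertices are the `k`-element subsets of a
`v`-element set, two vertices adjacent iff their intersection has exactly `i` elements. -/
def genJohnsonGraph (v k i : ℕ) :
    SimpleGraph {A : Finset (Fin v) // A.card = k} where
  Adj A B := A ≠ B ∧ (A.1 ∩ B.1).card = i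
  symm := by
    constructor
    rintro A B ⟨hne, hcard⟩
    exact ⟨hne.symm, by rwa [Finset.inter_comm]⟩
  loopless := by constructor; rintro A ⟨hne, -⟩; exact hne rfl

open Finset

variable {v k i Δ : ℕ}

lemma step_upper {A C D : Finset (Fin v)} (hA : A.card = k)
    (hCD : (C ∩ D).card = i) : (A ∩ D).card + (A ∩ C).card ≤ i + k := by
  have h1 : A ∩ D ⊆ (C ∩ D) ∪ (A \ C) := by
    intro x hx
    simp only [Finset.mem_inter, Finset.mem_union, Finset.mem_sdiff] at *
    tauto
  have h2 := Finset.card_le_card h1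
  have h3 := Finset.card_union_le (C ∩ D) (A \ C)
  have h4 := Finset.card_sdiff_add_card_inter A C
  omega

lemma step_lower {A C D : Finset (Fin v)} (hA : A.card = k) (hC : C.card = k) (hD : D.card = k)
    (hCD : (C ∩ D).card = i) : 3 * k ≤ (A ∩ D).card + i + v + (A ∩ C).card := by
  have h1 : D \ A ⊆ (C ∩ D) ∪ (A ∪ C)ᶜ := by
    intro x hx
    simp only [Finset.mem_inter, Finset.mem_union, Finset.mem_sdiff, Finset.mem_compl,
      not_or] at *
    tauto
  have h2 := Finset.card_le_card h1
  have h3 := Finset.card_union_le (C ∩ D) (A ∪ C)ᶜ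
  have h4 := Finset.card_sdiff_add_card_inter D A
  have h5 := Finset.card_union_add_card_inter A C
  have h6 := Finset.card_add_card_compl (A ∪ C)
  have h7 : Fintype.card (Fin v) = v := Fintype.card_fin v
  have h8 : (D ∩ A).card = (A ∩ D).card := by rw [Finset.inter_comm]
  omega

lemma walk_bound (hΔdef : v + 2 * i = 2 * k + Δ)
    {a c : {A : Finset (Fin v) // A.card = k}}
    (w : (genJohnsonGraph v k i).Walk a c) :
    (Even w.length → (k : ℤ) ≤ ((a.1 ∩ c.1).card : ℤ) + ((w.length / 2 : ℕ) : ℤ) * Δ) ∧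
    (Odd w.length → ((a.1 ∩ c.1).card : ℤ) ≤ i + ((w.length / 2 : ℕ) : ℤ) * Δ) := by
  induction w with
  | @nil u =>
    constructor
    · intro _
      simp only [SimpleGraph.Walk.length_nil, Finset.inter_self]
      simp [u.2]
    · intro h
      simp only [SimpleGraph.Walk.length_nil] at h
      exact absurd h (by simp [Nat.odd_iff])
  | @cons a b c h p ih =>
    have hab : (a.1 ∩ b.1).card = i := h.2
    have hba : (b.1 ∩ a.1).card = i := by rwa [Finset.inter_comm]
    have hcbbc : (b.1 ∩ c.1).card = (c.1 ∩ b.1).card := by rw [Finset.inter_comm]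
    have hΔz : (v : ℤ) + 2 * i = 2 * k + Δ := by exact_mod_cast hΔdef
    set n := p.length with hn
    have hlen : (SimpleGraph.Walk.cons h p).length = n + 1 :=
      SimpleGraph.Walk.length_cons _ _
    rw [hlen]
    constructor
    · intro heven
      have hodd : Odd n := by
        rcases Nat.even_or_odd n with h' | h'
        · exfalso; rw [Nat.even_iff] at heven h'; omega
        · exact h'
      have ihb := ih.2 hodd
      have hstep := step_lower (A := c.1) (C := b.1) (D := a.1) c.2 b.2 a.2 hba
      have hq : ((n + 1) / 2 : ℕ) = n / 2 + 1 := by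
        rw [Nat.odd_iff] at hodd; omega
      rw [hq]
      have hac : (a.1 ∩ c.1).card = (c.1 ∩ a.1).card := by rw [Finset.inter_comm]
      rw [hac]
      push_cast at hstep ihb ⊢
      rw [hcbbc] at ihb
      nlinarith [ihb, hstep, hΔz]
    · intro hoddn1
      have heven : Even n := by
        rcases Nat.even_or_odd n with h' | h'
        · exact h'
        · exfalso; rw [Nat.odd_iff] at hoddn1 h'; omega
      have ihb := ih.1 heven
      have hstep := step_upper (A := c.1) (C := b.1) (D := a.1) c.2 hba
      have hq : ((n + 1) / 2 : ℕ) = n / 2 := by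
        rw [Nat.even_iff] at heven; omega
      rw [hq]
      have hac : (a.1 ∩ c.1).card = (c.1 ∩ a.1).card := by rw [Finset.inter_comm]
      rw [hac]
      push_cast at hstep ihb ⊢
      rw [hcbbc] at ihb
      nlinarith [ihb, hstep]

lemma lower_bound (hΔdef : v + 2 * i = 2 * k + Δ) (hΔpos : 0 < Δ) (hik : i < k)
    {a : {A : Finset (Fin v) // A.card = k}}
    (w : (genJohnsonGraph v k i).Walk a a) (hodd : Odd w.length) :
    2 * ((k - i) ⌈/⌉ Δ) + 1 ≤ w.length := by
  have hb := (walk_bound hΔdef w).2 hodd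
  rw [Finset.inter_self] at hb
  rw [a.2] at hb
  set j := w.length / 2 with hj
  have h1 : k - i ≤ j * Δ := by
    have : (k : ℤ) ≤ i + (j * Δ : ℕ) := by push_cast; push_cast at hb; linarith
    omega
  have h2 : (k - i) ⌈/⌉ Δ ≤ j := (ceilDiv_le_iff_le_mul hΔpos).2 (by rw [mul_comm] at h1; exact h1)
  rw [Nat.odd_iff] at hodd
  omega

lemma exists_common_neighbor (h2i : 2 * i ≤ k) (h2k : 2 * k ≤ v)
    {C E : Finset (Fin v)} (hC : C.card = k) (hE : E.card = k)
    (hγ : 3 * k ≤ v + 2 * i + (C ∩ E).card) :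
    ∃ D : Finset (Fin v), D.card = k ∧ (C ∩ D).card = i ∧ (E ∩ D).card = i := by
  classical
  set γ := (C ∩ E).card with hγdef
  have hγk : γ ≤ k := by
    have h' : (C ∩ E).card ≤ C.card := Finset.card_le_card Finset.inter_subset_left
    omega
  -- choose sizes
  obtain ⟨p, q, o, hpq, hpγ, hqγ, hsum, ho⟩ :
      ∃ p q o : ℕ, p + q = i ∧ p ≤ γ ∧ q + γ ≤ k ∧ p + 2 * q + o = k ∧ o + 2 * k ≤ v + γ := by
    rcases le_or_gt (γ + i) k with hcase | hcase
    · exact ⟨0, i, k - 2 * i, by omega, by omega, by omega, by omega, by omega⟩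
    · exact ⟨i - (k - γ), k - γ, γ - i, by omega, by omega, by omega, by omega, by omega⟩
  -- cardinalities of the regions
  have hCE : (C \ E).card = k - γ := by
    have := Finset.card_sdiff_add_card_inter C E
    omega
  have hEC : (E \ C).card = k - γ := by
    have h1 := Finset.card_sdiff_add_card_inter E C
    have h2 : (E ∩ C).card = γ := by rw [Finset.inter_comm]
    omega
  have hO : ((C ∪ E)ᶜ).card = v - (2 * k - γ) := by
    have h1 := Finset.card_add_card_compl (C ∪ E)
    have h2 := Finset.card_union_add_card_inter C E
    have h3 : Fintype.card (Fin v) = v := Fintype.card_fin v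
    omega
  obtain ⟨S1, hS1sub, hS1⟩ := Finset.exists_subset_card_eq (s := C ∩ E) (n := p) (by omega)
  obtain ⟨S2, hS2sub, hS2⟩ := Finset.exists_subset_card_eq (s := C \ E) (n := q) (by omega)
  obtain ⟨S3, hS3sub, hS3⟩ := Finset.exists_subset_card_eq (s := E \ C) (n := q) (by omega)
  obtain ⟨S4, hS4sub, hS4⟩ := Finset.exists_subset_card_eq (s := (C ∪ E)ᶜ) (n := o) (by omega)
  refine ⟨S1 ∪ S2 ∪ S3 ∪ S4, ?_, ?_, ?_⟩
  · -- card
    have d12 : Disjoint S1 S2 := by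
      refine Finset.disjoint_left.2 fun x hx1 hx2 => ?_
      have := hS1sub hx1; have := hS2sub hx2
      simp only [Finset.mem_inter, Finset.mem_sdiff] at *; tauto
    have d13 : Disjoint S1 S3 := by
      refine Finset.disjoint_left.2 fun x hx1 hx2 => ?_
      have := hS1sub hx1; have := hS3sub hx2
      simp only [Finset.mem_inter, Finset.mem_sdiff] at *; tauto
    have d23 : Disjoint S2 S3 := by
      refine Finset.disjoint_left.2 fun x hx1 hx2 => ?_
      have := hS2sub hx1; have := hS3sub hx2
      simp only [Finset.mem_sdiff] at *; tauto
    have d14 : Disjoint (S1 ∪ S2 ∪ S3) S4 := by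
      refine Finset.disjoint_left.2 fun x hx1 hx2 => ?_
      have hx4 := hS4sub hx2
      simp only [Finset.mem_union, Finset.mem_compl, Finset.mem_inter, Finset.mem_sdiff] at *
      rcases hx1 with (h' | h') | h'
      · have := hS1sub h'; simp only [Finset.mem_inter] at this; tauto
      · have := hS2sub h'; simp only [Finset.mem_sdiff] at this; tauto
      · have := hS3sub h'; simp only [Finset.mem_sdiff] at this; tauto
    rw [Finset.card_union_of_disjoint d14, Finset.card_union_of_disjoint (Finset.disjoint_union_left.2 ⟨d13, d23⟩), Finset.card_union_of_disjoint d12]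
    omega
  · -- C ∩ D
    have : C ∩ (S1 ∪ S2 ∪ S3 ∪ S4) = S1 ∪ S2 := by
      apply Finset.Subset.antisymm
      · intro x hx
        simp only [Finset.mem_inter, Finset.mem_union] at hx
        rcases hx with ⟨hxC, ((h' | h') | h') | h'⟩
        · exact Finset.mem_union_left _ h'
        · exact Finset.mem_union_right _ h'
        · exact absurd ((Finset.mem_sdiff.1 (hS3sub h')).2 hxC) (fun h => h)
        · have := Finset.mem_compl.1 (hS4sub h')
          exact absurd (Finset.mem_union_left _ hxC) this
      · intro x hx
        simp only [Finset.mem_union] at hx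
        rcases hx with h' | h'
        · exact Finset.mem_inter.2 ⟨(Finset.mem_inter.1 (hS1sub h')).1,
            by simp [Finset.mem_union, h']⟩
        · exact Finset.mem_inter.2 ⟨(Finset.mem_sdiff.1 (hS2sub h')).1,
            by simp [Finset.mem_union, h']⟩
    rw [this]
    have d12 : Disjoint S1 S2 := by
      refine Finset.disjoint_left.2 fun x hx1 hx2 => ?_
      have := hS1sub hx1; have := hS2sub hx2
      simp only [Finset.mem_inter, Finset.mem_sdiff] at *; tauto
    rw [Finset.card_union_of_disjoint d12]; omega
  · -- E ∩ D
    have : E ∩ (S1 ∪ S2 ∪ S3 ∪ S4) = S1 ∪ S3 := by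
      apply Finset.Subset.antisymm
      · intro x hx
        simp only [Finset.mem_inter, Finset.mem_union] at hx
        rcases hx with ⟨hxE, ((h' | h') | h') | h'⟩
        · exact Finset.mem_union_left _ h'
        · exact absurd ((Finset.mem_sdiff.1 (hS2sub h')).2 hxE) (fun h => h)
        · exact Finset.mem_union_right _ h'
        · have := Finset.mem_compl.1 (hS4sub h')
          exact absurd (Finset.mem_union_right _ hxE) this
      · intro x hx
        simp only [Finset.mem_union] at hx
        rcases hx with h' | h'
        · exact Finset.mem_inter.2 ⟨(Finset.mem_inter.1 (hS1sub h')).2,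
            by simp [Finset.mem_union, h']⟩
        · exact Finset.mem_inter.2 ⟨(Finset.mem_sdiff.1 (hS3sub h')).1,
            by simp [Finset.mem_union, h']⟩
    rw [this]
    have d13 : Disjoint S1 S3 := by
      refine Finset.disjoint_left.2 fun x hx1 hx2 => ?_
      have := hS1sub hx1; have := hS3sub hx2
      simp only [Finset.mem_inter, Finset.mem_sdiff] at *; tauto
    rw [Finset.card_union_of_disjoint d13]; omega

lemma adj_of_inter (hik : i < k) {C D : Finset (Fin v)} (hC : C.card = k) (hD : D.card = k)
    (h : (C ∩ D).card = i) :
    (genJohnsonGraph v k i).Adj ⟨C, hC⟩ ⟨D, hD⟩ := by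
  refine ⟨fun heq => ?_, h⟩
  have hCD : C = D := congrArg Subtype.val heq
  rw [hCD, Finset.inter_self, hD] at h
  omega

lemma two_step (hik : i < k) (h2i : 2 * i ≤ k) (h2k : 2 * k ≤ v)
    (hΔdef : v + 2 * i = 2 * k + Δ)
    {C C' : Finset (Fin v)} (hC : C.card = k) (hC' : C'.card = k) :
    ∃ (D E : Finset (Fin v)) (hD : D.card = k) (hE : E.card = k),
      (C ∩ D).card = i ∧ (D ∩ E).card = i ∧
      min ((C ∩ C').card + Δ) k ≤ (E ∩ C').card := by
  classical
  set c := (C ∩ C').card with hcdef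
  have hck : c ≤ k := by
    have h' : (C ∩ C').card ≤ C.card := Finset.card_le_card Finset.inter_subset_left
    omega
  set e := min (c + Δ) k with hedef
  have hce : c ≤ e ∧ e ≤ k ∧ e ≤ c + Δ := by omega
  have hR : (C' \ C).card = k - c := by
    have h1 := Finset.card_sdiff_add_card_inter C' C
    have h2 : (C' ∩ C).card = c := by rw [Finset.inter_comm]
    omega
  have hQ : (C \ C').card = k - c := by
    have h1 := Finset.card_sdiff_add_card_inter C C'
    omega
  obtain ⟨R1, hR1sub, hR1⟩ := Finset.exists_subset_card_eq (s := C' \ C) (n := e - c) (by omega)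
  obtain ⟨W, hWsub, hW⟩ := Finset.exists_subset_card_eq (s := C \ C') (n := k - e) (by omega)
  set E := (C ∩ C') ∪ R1 ∪ W with hEdef
  have dPR : Disjoint (C ∩ C') R1 := by
    refine Finset.disjoint_left.2 fun x hx1 hx2 => ?_
    have := hR1sub hx2
    simp only [Finset.mem_inter, Finset.mem_sdiff] at *; tauto
  have dPW : Disjoint (C ∩ C') W := by
    refine Finset.disjoint_left.2 fun x hx1 hx2 => ?_
    have := hWsub hx2
    simp only [Finset.mem_inter, Finset.mem_sdiff] at *; tauto
  have dRW : Disjoint R1 W := by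
    refine Finset.disjoint_left.2 fun x hx1 hx2 => ?_
    have := hR1sub hx1; have := hWsub hx2
    simp only [Finset.mem_sdiff] at *; tauto
  have hEcard : E.card = k := by
    rw [hEdef, Finset.card_union_of_disjoint (by
      refine Finset.disjoint_union_left.2 ⟨dPW, dRW⟩),
      Finset.card_union_of_disjoint dPR]
    omega
  have hEC' : (E ∩ C').card = e := by
    have : E ∩ C' = (C ∩ C') ∪ R1 := by
      apply Finset.Subset.antisymm
      · intro x hx
        simp only [hEdef, Finset.mem_inter, Finset.mem_union] at hx ⊢
        rcases hx with ⟨(h' | h') | h', hxC'⟩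
        · exact Or.inl h'
        · exact Or.inr h'
        · exact absurd hxC' (Finset.mem_sdiff.1 (hWsub h')).2
      · intro x hx
        simp only [Finset.mem_union] at hx
        rcases hx with h' | h'
        · exact Finset.mem_inter.2 ⟨by simp [hEdef, Finset.mem_union, h'],
            (Finset.mem_inter.1 h').2⟩
        · exact Finset.mem_inter.2 ⟨by simp [hEdef, Finset.mem_union, h'],
            (Finset.mem_sdiff.1 (hR1sub h')).1⟩
    rw [this, Finset.card_union_of_disjoint dPR]
    omega
  have hCE : (C ∩ E).card = c + (k - e) := by
    have : C ∩ E = (C ∩ C') ∪ W := by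
      apply Finset.Subset.antisymm
      · intro x hx
        simp only [hEdef, Finset.mem_inter, Finset.mem_union] at hx ⊢
        rcases hx with ⟨hxC, (h' | h') | h'⟩
        · exact Or.inl h'
        · exact absurd hxC (Finset.mem_sdiff.1 (hR1sub h')).2
        · exact Or.inr h'
      · intro x hx
        simp only [Finset.mem_union] at hx
        rcases hx with h' | h'
        · exact Finset.mem_inter.2 ⟨(Finset.mem_inter.1 h').1,
            by simp [hEdef, Finset.mem_union, h']⟩
        · exact Finset.mem_inter.2 ⟨(Finset.mem_sdiff.1 (hWsub h')).1,
            by simp [hEdef, Finset.mem_union, h']⟩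
    rw [this, Finset.card_union_of_disjoint dPW]
    omega
  have hγE : 3 * k ≤ v + 2 * i + (C ∩ E).card := by omega
  obtain ⟨D, hDcard, hCDi, hEDi⟩ := exists_common_neighbor h2i h2k hC hEcard hγE
  refine ⟨D, E, hDcard, hEcard, hCDi, by rwa [Finset.inter_comm], by omega⟩

lemma even_walk (hik : i < k) (h2i : 2 * i ≤ k) (h2k : 2 * k ≤ v)
    (hΔdef : v + 2 * i = 2 * k + Δ) :
    ∀ (j : ℕ) (Cs Cs' : {A : Finset (Fin v) // A.card = k}),
      (k : ℤ) ≤ ((Cs.1 ∩ Cs'.1).card : ℤ) + (j : ℤ) * Δ →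
      ∃ w : (genJohnsonGraph v k i).Walk Cs Cs', w.length = 2 * j := by
  intro j
  induction j with
  | zero =>
    intro Cs Cs' hcard
    have heq : (k : ℤ) ≤ ((Cs.1 ∩ Cs'.1).card : ℤ) := by simpa using hcard
    have heq' : k ≤ (Cs.1 ∩ Cs'.1).card := by exact_mod_cast heq
    have hle : (Cs.1 ∩ Cs'.1).card ≤ Cs.1.card := Finset.card_le_card Finset.inter_subset_left
    have hsub : Cs.1 ∩ Cs'.1 = Cs.1 :=
      Finset.eq_of_subset_of_card_le Finset.inter_subset_left (by omega)
    have hsub2 : Cs.1 ⊆ Cs'.1 := by rw [← hsub]; exact Finset.inter_subset_right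
    have h1 : Cs.1 = Cs'.1 :=
      Finset.eq_of_subset_of_card_le hsub2 (by rw [Cs.2, Cs'.2])
    have h2 : Cs = Cs' := Subtype.ext h1
    subst h2
    exact ⟨SimpleGraph.Walk.nil, rfl⟩
  | succ j ih =>
    intro Cs Cs' hcard
    obtain ⟨D, E, hD, hE, hCD, hDE, hmin⟩ := two_step hik h2i h2k hΔdef Cs.2 Cs'.2
    have hEk : (k : ℤ) ≤ ((E ∩ Cs'.1).card : ℤ) + (j : ℤ) * Δ := by
      have h1 := hmin
      have h4 := hcard
      push_cast at h4
      have hjj : (0:ℤ) ≤ (j:ℤ) * Δ := by positivity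
      rcases le_or_gt ((Cs.1 ∩ Cs'.1).card + Δ) k with h' | h'
      · rw [min_eq_left h'] at h1
        have h3 : ((Cs.1 ∩ Cs'.1).card : ℤ) + (Δ:ℤ) ≤ ((E ∩ Cs'.1).card : ℤ) := by
          exact_mod_cast h1
        nlinarith [h4, h3]
      · rw [min_eq_right (le_of_lt (by omega : k < (Cs.1 ∩ Cs'.1).card + Δ))] at h1
        have h3 : (k:ℤ) ≤ ((E ∩ Cs'.1).card : ℤ) := by exact_mod_cast h1
        linarith
    obtain ⟨w', hw'⟩ := ih ⟨E, hE⟩ Cs' hEk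
    refine ⟨SimpleGraph.Walk.cons (adj_of_inter hik Cs.2 hD hCD)
      (SimpleGraph.Walk.cons (adj_of_inter hik hD hE hDE) w'), ?_⟩
    simp only [SimpleGraph.Walk.length_cons, hw']
    omega

lemma exists_closed_odd_walk (hik : i < k) (h2i : 2 * i ≤ k) (h2k : 2 * k ≤ v)
    (hΔdef : v + 2 * i = 2 * k + Δ) (hΔpos : 0 < Δ) :
    ∃ (A : {A : Finset (Fin v) // A.card = k}) (w : (genJohnsonGraph v k i).Walk A A),
      w.length = 2 * ((k - i) ⌈/⌉ Δ) + 1 := by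
  classical
  have hkv : k ≤ v := by omega
  obtain ⟨A0, -, hA0⟩ := Finset.exists_subset_card_eq
    (s := (Finset.univ : Finset (Fin v))) (n := k) (by simpa using hkv)
  obtain ⟨D, hDcard, hAD, hAD2⟩ := exists_common_neighbor h2i h2k hA0 hA0
    (by rw [Finset.inter_self, hA0]; omega)
  set t := (k - i) ⌈/⌉ Δ with htdef
  have hkt : k - i ≤ Δ * t := le_smul_ceilDiv hΔpos
  have hb : (k : ℤ) ≤ ((D ∩ A0).card : ℤ) + (t : ℤ) * Δ := by
    have : (D ∩ A0).card = i := by rwa [Finset.inter_comm]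
    rw [this]
    have h5 : ((k - i : ℕ) : ℤ) ≤ (Δ : ℤ) * t := by exact_mod_cast hkt
    rw [Nat.cast_sub hik.le] at h5
    linarith [mul_comm (Δ : ℤ) (t : ℤ)]
  obtain ⟨w', hw'⟩ := even_walk hik h2i h2k hΔdef t ⟨D, hDcard⟩ ⟨A0, hA0⟩ hb
  refine ⟨⟨A0, hA0⟩, SimpleGraph.Walk.cons (adj_of_inter hik hA0 hDcard hAD) w', ?_⟩
  simp only [SimpleGraph.Walk.length_cons, hw']

lemma edge_not_mem_of_support_nodup {V' : Type*} {G : SimpleGraph V'} {a b : V'}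
    (hab : a ≠ b) (p : G.Walk b a) (hnd : p.support.Nodup) (hlen : p.length ≠ 1) :
    s(a, b) ∉ p.edges := by
  intro he
  cases p with
  | nil => simp at he
  | @cons _ y _ h' q =>
    rw [SimpleGraph.Walk.edges_cons, List.mem_cons] at he
    have hnd' : b ∉ q.support ∧ q.support.Nodup := by
      simpa [SimpleGraph.Walk.support_cons, List.nodup_cons] using hnd
    rcases he with he | he
    · rw [Sym2.eq_iff] at he
      rcases he with ⟨h1, h2⟩ | ⟨h1, h2⟩
      · exact hab h1
      · subst h1
        cases q with
        | nil => exact hlen (by simp)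
        | @cons _ z _ h'' r =>
          have hmem : a ∈ r.support := SimpleGraph.Walk.end_mem_support r
          have : a ∉ r.support := by
            have := hnd'.2
            simp only [SimpleGraph.Walk.support_cons, List.nodup_cons] at this
            exact this.1
          exact this hmem
    · exact hnd'.1 (q.snd_mem_support_of_mem_edges he)

lemma exists_odd_cycle_of_odd_closed_walk {V' : Type*} [DecidableEq V'] {G : SimpleGraph V'} :
    ∀ (n : ℕ), Odd n → ∀ (a : V') (w : G.Walk a a), w.length = n →
      ∃ (b : V') (c : G.Walk b b), c.IsCycle ∧ Odd c.length ∧ c.length ≤ n := by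
  intro n
  induction n using Nat.strong_induction_on with
  | _ n IH =>
    intro hodd a w hlen
    by_cases hnd : w.support.tail.Nodup
    · cases w with
      | nil =>
        simp only [SimpleGraph.Walk.length_nil] at hlen
        rw [← hlen] at hodd
        exact absurd hodd (by simp [Nat.odd_iff])
      | @cons _ y _ h p =>
        have hpn : p.support.Nodup := by
          simpa [SimpleGraph.Walk.support_cons] using hnd
        have hlp : p.length ≠ 1 := by
          intro h1
          rw [SimpleGraph.Walk.length_cons, h1] at hlen
          rw [← hlen] at hodd
          exact absurd hodd (by simp [Nat.odd_iff])
        have hcyc : (SimpleGraph.Walk.cons h p).IsCycle :=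
          (SimpleGraph.Walk.cons_isCycle_iff p h).2
            ⟨SimpleGraph.Walk.IsPath.mk' hpn,
              edge_not_mem_of_support_nodup h.ne p hpn hlp⟩
        exact ⟨a, SimpleGraph.Walk.cons h p, hcyc, hlen ▸ hodd, le_of_eq hlen⟩
    · have hx : ∃ x, 2 ≤ w.support.tail.count x := by
        by_contra hx
        push_neg at hx
        exact hnd (List.nodup_iff_count_le_one.2 fun x => by have := hx x; omega)
      obtain ⟨x, hx2⟩ := hx
      have hxmem : x ∈ w.support.tail := List.count_pos_iff.1 (by omega)
      have hxs : x ∈ w.support := List.mem_of_mem_tail hxmem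
      have hw'len : (w.rotate x hxs).length = n := by
        have h1 := congrArg SimpleGraph.Walk.length (w.take_spec hxs)
        rw [SimpleGraph.Walk.length_append] at h1
        have h2 : (w.rotate x hxs).length
            = (w.dropUntil x hxs).length + (w.takeUntil x hxs).length :=
          SimpleGraph.Walk.length_append _ _
        omega
      have hw'cnt : 2 ≤ (w.rotate x hxs).support.tail.count x := by
        rw [(SimpleGraph.Walk.support_rotate w x hxs).perm.count_eq x]
        exact hx2
      have hnnil : ¬ (w.rotate x hxs).Nil := by
        rw [SimpleGraph.Walk.not_nil_iff_lt_length, hw'len]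
        rcases hodd with ⟨m, hm⟩; omega
      obtain ⟨y, hadj, q, hcons⟩ := SimpleGraph.Walk.not_nil_iff.1 hnnil
      rw [hcons] at hw'len hw'cnt
      rw [SimpleGraph.Walk.length_cons] at hw'len
      have hqcnt : 2 ≤ q.support.count x := by
        simpa [SimpleGraph.Walk.support_cons] using hw'cnt
      have hqmem : x ∈ q.support := List.count_pos_iff.1 (by omega)
      have hspec := q.take_spec hqmem
      have hlensum : (q.takeUntil x hqmem).length + (q.dropUntil x hqmem).length = q.length := by
        have := congrArg SimpleGraph.Walk.length hspec
        rwa [SimpleGraph.Walk.length_append] at this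
      have hcnt1 : (q.takeUntil x hqmem).support.count x = 1 :=
        q.count_support_takeUntil_eq_one hqmem
      have hcnt2 : 1 ≤ (q.dropUntil x hqmem).support.tail.count x := by
        have := congrArg (fun l => l.support.count x) hspec
        simp only [SimpleGraph.Walk.support_append, List.count_append] at this
        omega
      have hq2len : (q.dropUntil x hqmem).length ≠ 0 := by
        intro h0
        have : q.dropUntil x hqmem = SimpleGraph.Walk.nil :=
          SimpleGraph.Walk.nil_iff_eq_nil.1 (SimpleGraph.Walk.length_eq_zero_iff.1 h0)
        rw [this] at hcnt2
        simp at hcnt2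
      set n1 := (q.takeUntil x hqmem).length + 1 with hn1
      set n2 := (q.dropUntil x hqmem).length with hn2
      have hsum : n1 + n2 = n := by omega
      by_cases ho1 : Odd n1
      · obtain ⟨b, c, hc, hco, hcle⟩ :=
          IH n1 (by omega) ho1 x (SimpleGraph.Walk.cons hadj (q.takeUntil x hqmem))
            (by simp [SimpleGraph.Walk.length_cons, hn1])
        exact ⟨b, c, hc, hco, by omega⟩
      · have ho2 : Odd n2 := by
          rw [Nat.odd_iff] at hodd ⊢
          rw [Nat.not_odd_iff_even, Nat.even_iff] at ho1
          omega
        obtain ⟨b, c, hc, hco, hcle⟩ :=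
          IH n2 (by omega) ho2 x (q.dropUntil x hqmem) rfl
        exact ⟨b, c, hc, hco, by omega⟩

lemma triangle_of_big_i (hik : i < k) (h2k : 2 * k ≤ v) (hki : k < 2 * i) :
    ∃ (A B C : Finset (Fin v)), A.card = k ∧ B.card = k ∧ C.card = k ∧
      (A ∩ B).card = i ∧ (B ∩ C).card = i ∧ (C ∩ A).card = i := by
  classical
  have hcu : (Finset.univ : Finset (Fin v)).card = v := by simp
  obtain ⟨T, -, hT⟩ := Finset.exists_subset_card_eq
    (s := (Finset.univ : Finset (Fin v))) (n := 2 * i - k) (by omega)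
  have hTc : Tᶜ.card = v - (2 * i - k) := by
    have := Finset.card_add_card_compl T
    have h7 : Fintype.card (Fin v) = v := Fintype.card_fin v
    omega
  obtain ⟨Pab, hPabs, hPab⟩ := Finset.exists_subset_card_eq
    (s := Tᶜ) (n := k - i) (by omega)
  have hPabT : Disjoint Pab T := by
    refine Finset.disjoint_left.2 fun x hx1 hx2 => ?_
    exact Finset.mem_compl.1 (hPabs hx1) hx2
  have hTPabc : ((T ∪ Pab)ᶜ).card = v - (2 * i - k) - (k - i) := by
    have h1 := Finset.card_add_card_compl (T ∪ Pab)
    have h2 : (T ∪ Pab).card = (2 * i - k) + (k - i) := by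
      rw [Finset.card_union_of_disjoint hPabT.symm, hT, hPab]
    have h7 : Fintype.card (Fin v) = v := Fintype.card_fin v
    omega
  obtain ⟨Pac, hPacs, hPac⟩ := Finset.exists_subset_card_eq
    (s := (T ∪ Pab)ᶜ) (n := k - i) (by omega)
  have hPacT : ∀ x ∈ Pac, x ∉ T ∧ x ∉ Pab := by
    intro x hx
    have := Finset.mem_compl.1 (hPacs hx)
    simp only [Finset.mem_union, not_or] at this
    exact this
  have hTPPc : ((T ∪ Pab ∪ Pac)ᶜ).card = v - (2 * i - k) - (k - i) - (k - i) := by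
    have h1 := Finset.card_add_card_compl (T ∪ Pab ∪ Pac)
    have h2 : (T ∪ Pab ∪ Pac).card = (2 * i - k) + (k - i) + (k - i) := by
      rw [Finset.card_union_of_disjoint, Finset.card_union_of_disjoint hPabT.symm, hT, hPab, hPac]
      refine Finset.disjoint_left.2 fun x hx1 hx2 => ?_
      exact Finset.mem_compl.1 (hPacs hx2) hx1
    have h7 : Fintype.card (Fin v) = v := Fintype.card_fin v
    omega
  obtain ⟨Pbc, hPbcs, hPbc⟩ := Finset.exists_subset_card_eq
    (s := (T ∪ Pab ∪ Pac)ᶜ) (n := k - i) (by omega)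
  have hPbcT : ∀ x ∈ Pbc, x ∉ T ∧ x ∉ Pab ∧ x ∉ Pac := by
    intro x hx
    have := Finset.mem_compl.1 (hPbcs hx)
    simp only [Finset.mem_union, not_or] at this
    tauto
  refine ⟨T ∪ Pab ∪ Pac, T ∪ Pab ∪ Pbc, T ∪ Pac ∪ Pbc, ?_, ?_, ?_, ?_, ?_, ?_⟩
  · rw [Finset.card_union_of_disjoint, Finset.card_union_of_disjoint hPabT.symm, hT, hPab, hPac]
    · omega
    · exact Finset.disjoint_left.2 fun x hx1 hx2 => by
        have := hPacT x hx2; simp only [Finset.mem_union] at hx1; tauto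
  · rw [Finset.card_union_of_disjoint, Finset.card_union_of_disjoint hPabT.symm, hT, hPab, hPbc]
    · omega
    · exact Finset.disjoint_left.2 fun x hx1 hx2 => by
        have := hPbcT x hx2; simp only [Finset.mem_union] at hx1; tauto
  · rw [Finset.card_union_of_disjoint, Finset.card_union_of_disjoint, hT, hPac, hPbc]
    · omega
    · exact Finset.disjoint_left.2 fun x hx1 hx2 => (hPacT x hx2).1 hx1
    · exact Finset.disjoint_left.2 fun x hx1 hx2 => by
        have := hPbcT x hx2; simp only [Finset.mem_union] at hx1; tauto
  · have heq : (T ∪ Pab ∪ Pac) ∩ (T ∪ Pab ∪ Pbc) = T ∪ Pab := by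
      ext z
      simp only [Finset.mem_inter, Finset.mem_union]
      constructor
      · rintro ⟨h1 | h2, h3⟩
        · exact h1
        · rcases h3 with h3 | h3
          · exact h3
          · exact absurd h2 (by have := hPbcT z h3; tauto)
      · intro h1; exact ⟨Or.inl h1, Or.inl h1⟩
    rw [heq, Finset.card_union_of_disjoint hPabT.symm, hT, hPab]; omega
  · have heq : (T ∪ Pab ∪ Pbc) ∩ (T ∪ Pac ∪ Pbc) = T ∪ Pbc := by
      ext z
      simp only [Finset.mem_inter, Finset.mem_union]
      constructor
      · rintro ⟨h1, h2⟩
        rcases h1 with (h1 | h1) | h1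
        · exact Or.inl h1
        · rcases h2 with (h2 | h2) | h2
          · exact Or.inl h2
          · exact absurd h1 (by have := hPacT z h2; tauto)
          · exact Or.inr h2
        · exact Or.inr h1
      · rintro (h1 | h1)
        · exact ⟨Or.inl (Or.inl h1), Or.inl (Or.inl h1)⟩
        · exact ⟨Or.inr h1, Or.inr h1⟩
    rw [heq, Finset.card_union_of_disjoint, hT, hPbc]
    · omega
    · exact Finset.disjoint_left.2 fun x hx1 hx2 => (hPbcT x hx2).1 hx1
  · have heq : (T ∪ Pac ∪ Pbc) ∩ (T ∪ Pab ∪ Pac) = T ∪ Pac := by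
      ext z
      simp only [Finset.mem_inter, Finset.mem_union]
      constructor
      · rintro ⟨h1, h2⟩
        rcases h1 with (h1 | h1) | h1
        · exact Or.inl h1
        · exact Or.inr h1
        · rcases h2 with (h2 | h2) | h2
          · exact absurd h2 (by have := hPbcT z h1; tauto)
          · exact absurd h2 (by have := hPbcT z h1; tauto)
          · exact absurd h2 (by have := hPbcT z h1; tauto)
      · rintro (h1 | h1)
        · exact ⟨Or.inl (Or.inl h1), Or.inl (Or.inl h1)⟩
        · exact ⟨Or.inl (Or.inr h1), Or.inr h1⟩
    rw [heq, Finset.card_union_of_disjoint, hT, hPac]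
    · omega
    · exact Finset.disjoint_left.2 fun x hx1 hx2 => (hPacT x hx2).1 hx1

lemma no_triangle_of_girth_four {V' : Type*} {G : SimpleGraph V'}
    (hg : G.girth = 4) {A B C : V'} (hAB : G.Adj A B) (hBC : G.Adj B C)
    (hCA : G.Adj C A) : False := by
  classical
  set p : G.Walk B A := SimpleGraph.Walk.cons hBC (SimpleGraph.Walk.cons hCA SimpleGraph.Walk.nil)
    with hpdef
  have hsup : p.support = [B, C, A] := rfl
  have hpath : p.IsPath := by
    apply SimpleGraph.Walk.IsPath.mk'
    rw [hsup]
    simp [hBC.ne, hCA.ne, hCA.ne', hAB.ne, hAB.ne']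
  have hedge : ¬ s(A, B) ∈ p.edges := by
    have hed : p.edges = [s(B, C), s(C, A)] := rfl
    rw [hed]
    simp only [List.mem_cons, List.not_mem_nil, or_false]
    rintro (h | h) <;> rw [Sym2.eq_iff] at h <;>
      rcases h with ⟨h1, h2⟩ | ⟨h1, h2⟩
    · exact hAB.ne h1
    · exact hCA.ne h1.symm
    · exact hCA.ne h1.symm
    · exact hBC.ne h2
  have hcyc : (SimpleGraph.Walk.cons hAB p).IsCycle :=
    (SimpleGraph.Walk.cons_isCycle_iff p hAB).2 ⟨hpath, hedge⟩
  have hlen : (SimpleGraph.Walk.cons hAB p).length = 3 := rfl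
  have h1 : G.egirth ≤ ((SimpleGraph.Walk.cons hAB p).length : ℕ∞) := by
    calc G.egirth ≤ ⨅ (w : G.Walk A A), ⨅ (_ : w.IsCycle), (w.length : ℕ∞) :=
          iInf_le _ A
      _ ≤ ⨅ (_ : (SimpleGraph.Walk.cons hAB p).IsCycle),
            ((SimpleGraph.Walk.cons hAB p).length : ℕ∞) := iInf_le _ _
      _ ≤ _ := iInf_le _ hcyc
  rw [hlen] at h1
  have h2 : G.girth ≤ 3 := by
    have := ENat.toNat_le_toNat h1 (by simp)
    simpa [SimpleGraph.girth] using this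
  omega

/-- If `J(v,k,i)` has girth 4, then its odd girth equals `2⌈(k-i)/Δ⌉ + 1`:
there is an odd cycle of that length and no shorter odd cycle. -/
theorem odd_girth_girth_four (v k i : ℕ) (hik : i < k) (hkv : k < v)
    (h2k : 2 * k ≤ v) (hexc : ¬(v = 2 * k ∧ i = 0))
    (hg : (genJohnsonGraph v k i).girth = 4) :
    (∃ (A : {A : Finset (Fin v) // A.card = k})
      (c : (genJohnsonGraph v k i).Walk A A),
        c.IsCycle ∧ c.length = 2 * ((k - i) ⌈/⌉ (v - 2 * k + 2 * i)) + 1) ∧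
    (∀ (A : {A : Finset (Fin v) // A.card = k})
      (c : (genJohnsonGraph v k i).Walk A A),
        c.IsCycle → Odd c.length →
          2 * ((k - i) ⌈/⌉ (v - 2 * k + 2 * i)) + 1 ≤ c.length) := by
  classical
  set Δ := v - 2 * k + 2 * i with hΔ0
  have hΔdef : v + 2 * i = 2 * k + Δ := by rw [hΔ0]; omega
  have hΔpos : 0 < Δ := by
    rcases Nat.lt_or_ge (2 * k) v with h' | h'
    · omega
    · have hveq : v = 2 * k := by omega
      have : i ≠ 0 := fun h0 => hexc ⟨hveq, h0⟩
      omega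
  have h2i : 2 * i ≤ k := by
    by_contra h2i
    obtain ⟨A, B, C, hA, hB, hC, hiAB, hiBC, hiCA⟩ :=
      triangle_of_big_i hik h2k (by omega)
    exact no_triangle_of_girth_four hg
      (adj_of_inter hik hA hB hiAB)
      (adj_of_inter hik hB hC hiBC)
      (adj_of_inter hik hC hA hiCA)
  constructor
  · obtain ⟨A, w, hw⟩ := exists_closed_odd_walk hik h2i h2k hΔdef hΔpos
    have hoddw : Odd w.length := by rw [Nat.odd_iff, hw]; omega
    obtain ⟨b, c, hcyc, hcodd, hcle⟩ :=
      exists_odd_cycle_of_odd_closed_walk w.length hoddw A w rfl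
    have hlb := lower_bound hΔdef hΔpos hik c hcodd
    exact ⟨b, c, hcyc, by omega⟩
  · intro A c _ hodd
    exact lower_bound hΔdef hΔpos hik c hodd
end

section
/- The odd girth of X = J(v,k,i) equals 2⌈(k − i)/Δ⌉ + 1; that is, X contains an odd cycle of length 2⌈(k − i)/Δ⌉ + 1 and contains no shorter odd cycle. -/
namespace OGAux

open Finset SimpleGraph


variable {V : Type*} {G : SimpleGraph V}

/-- Build a walk following `g 0, g 1, ..., g L`. -/
def chainWalk (g : ℕ → V) : (L : ℕ) → (∀ j, j < L → G.Adj (g j) (g (j+1))) → G.Walk (g 0) (g L)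
  | 0, _ => .nil
  | (L+1), h => (chainWalk g L (fun j hj => h j (by omega))).concat (h L (by omega))

@[simp] lemma length_chainWalk (g : ℕ → V) (L : ℕ) (h : ∀ j, j < L → G.Adj (g j) (g (j+1))) :
    (chainWalk g L h : G.Walk (g 0) (g L)).length = L := by
  induction L with
  | zero => rfl
  | succ L ih => simp [chainWalk, Walk.length_concat, ih]

lemma path_edge_ends : ∀ {y u : V} (p : G.Walk y u), p.IsPath → s(u, y) ∈ p.edges →
    p.length = 1 := by
  intro y u p
  induction p with
  | nil => simp
  | @cons y z u h' q ih =>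
    intro hp hmem
    rw [Walk.edges_cons, List.mem_cons] at hmem
    rcases hmem with heq | hmem
    · rw [Sym2.eq_iff] at heq
      rcases heq with ⟨rfl, rfl⟩ | ⟨h1, h2⟩
      · exact absurd rfl h'.ne
      · subst h1
        cases q with
        | nil => simp
        | @cons _ w _ h'' r =>
          exfalso
          have hp' := hp.of_cons
          rw [Walk.isPath_def, Walk.support_cons, List.nodup_cons] at hp'
          exact hp'.1 (Walk.end_mem_support r)
    · exfalso
      have hy : y ∈ q.support := Walk.snd_mem_support_of_mem_edges q hmem
      rw [Walk.isPath_def, Walk.support_cons, List.nodup_cons] at hp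
      exact hp.1 hy

/-- Any closed walk of odd length contains an odd cycle of at most that length. -/
lemma exists_odd_cycle : ∀ (L : ℕ), ∀ (u : V) (w : G.Walk u u), w.length = L → Odd L →
    ∃ (x : V) (c : G.Walk x x), c.IsCycle ∧ Odd c.length ∧ c.length ≤ L := by
  intro L
  induction L using Nat.strong_induction_on with
  | _ L IH =>
  intro u w hw hodd
  classical
  have hL0 : L ≠ 0 := by rintro rfl; simpa using hodd
  have hL1 : L ≠ 1 := by
    rintro rfl
    have h := w.adj_getVert_succ (i := 0) (by omega)
    rw [Walk.getVert_zero] at h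
    have h1 : w.getVert 1 = u := by rw [← hw]; exact w.getVert_length
    rw [h1] at h
    exact G.loopless.irrefl u h
  have hL3 : 3 ≤ L := by
    obtain ⟨m, rfl⟩ := hodd; omega
  by_cases hnd : w.support.tail.Nodup
  · cases w with
    | nil => simp at hw; omega
    | @cons _ y _ h p =>
      refine ⟨u, .cons h p, ?_, ?_, le_of_eq hw⟩
      · rw [Walk.cons_isCycle_iff]
        refine ⟨?_, ?_⟩
        · rw [Walk.isPath_def]
          simpa using hnd
        · intro hmem
          have hp : p.IsPath := by rw [Walk.isPath_def]; simpa using hnd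
          have := path_edge_ends p hp hmem
          simp only [Walk.length_cons] at hw
          omega
      · rw [hw]; exact hodd
  · obtain ⟨x, hdup⟩ := List.exists_duplicate_iff_not_nodup.2 hnd
    have hcount : 2 ≤ w.support.tail.count x := List.duplicate_iff_two_le_count.1 hdup
    have hxsup : x ∈ w.support := by
      rw [w.support_eq_cons]
      exact List.mem_cons_of_mem _ hdup.mem
    set w' := w.rotate x hxsup with hw'def
    have hlen' : w'.length = L := by
      rw [hw'def, Walk.rotate, Walk.length_append, Nat.add_comm, ← Walk.length_append,
        Walk.take_spec, hw]
    have hcount' : 2 ≤ w'.support.tail.count x := by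
      rw [(w.support_rotate x hxsup).perm.count_eq]
      exact hcount
    have hnil : ¬ w'.Nil := by rw [Walk.not_nil_iff_lt_length]; omega
    obtain ⟨y, hadj, q, hq⟩ := Walk.not_nil_iff.1 hnil
    rw [hq] at hcount' hlen'
    rw [Walk.support_cons, List.tail_cons] at hcount'
    rw [Walk.length_cons] at hlen'
    have hxq : x ∈ q.support := List.count_pos_iff.1 (by omega)
    have hspec := q.take_spec hxq
    have hlensum : (q.takeUntil x hxq).length + (q.dropUntil x hxq).length = q.length := by
      rw [← Walk.length_append, hspec]
    have hq2 : 1 ≤ (q.dropUntil x hxq).length := by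
      by_contra hc
      have h0 : (q.dropUntil x hxq).length = 0 := by omega
      have htail : (q.dropUntil x hxq).support.tail.length = 0 := by
        have h1 := (q.dropUntil x hxq).length_support
        have h2 := List.length_tail (l := (q.dropUntil x hxq).support)
        omega
      have hcnt : List.count x q.support
          = List.count x (q.takeUntil x hxq).support
            + List.count x (q.dropUntil x hxq).support.tail := by
        conv_lhs => rw [← hspec]
        rw [Walk.support_append, List.count_append]
      rw [q.count_support_takeUntil_eq_one hxq] at hcnt
      have hle := List.count_le_length (a := x) (l := (q.dropUntil x hxq).support.tail)
      omega
    set c1 : G.Walk x x := Walk.cons hadj (q.takeUntil x hxq) with hc1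
    set c2 : G.Walk x x := q.dropUntil x hxq with hc2
    have hsum : c1.length + c2.length = L := by
      rw [hc1, Walk.length_cons]; omega
    have hodd12 : Odd c1.length ∨ Odd c2.length := by
      rcases Nat.even_or_odd c1.length with ⟨m, hm⟩ | ho
      · rcases Nat.even_or_odd c2.length with ⟨r, hr⟩ | ho2
        · exfalso; obtain ⟨m', hm'⟩ := hodd; omega
        · right; exact ho2
      · left; exact ho
    rcases hodd12 with ho | ho
    · obtain ⟨z, c, hc, hoc, hlc⟩ := IH c1.length (by omega) x c1 rfl ho
      exact ⟨z, c, hc, hoc, by omega⟩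
    · obtain ⟨z, c, hc, hoc, hlc⟩ := IH c2.length (by omega) x c2 rfl ho
      exact ⟨z, c, hc, hoc, by omega⟩



variable {α : Type*} [DecidableEq α]

lemma ineqU (X Y Z : Finset α) :
    (X ∩ Z).card + (X ∩ Y).card ≤ X.card + (Y ∩ Z).card := by
  have hsub : X ∩ Z ⊆ (Y ∩ Z) ∪ (X \ Y) := by
    intro a ha
    simp only [mem_inter, mem_union, mem_sdiff] at *
    tauto
  have h1 := card_le_card hsub
  have h2 := card_union_le (Y ∩ Z) (X \ Y)
  have h3 := card_inter_add_card_sdiff X Y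
  omega

lemma ineqL [Fintype α] (X Y Z : Finset α) :
    X.card + Y.card + Z.card ≤
      Fintype.card α + (X ∩ Y).card + (X ∩ Z).card + (Y ∩ Z).card := by
  have h1 := card_union_add_card_inter X Y
  have h2 := card_union_add_card_inter (X ∪ Y) Z
  have h3 : ((X ∪ Y) ∩ Z).card ≤ (X ∩ Z).card + (Y ∩ Z).card := by
    rw [union_inter_distrib_right]
    exact card_union_le _ _
  have h4 : ((X ∪ Y) ∪ Z).card ≤ Fintype.card α := by
    simpa using card_le_univ ((X ∪ Y) ∪ Z)
  omega

/-- The patch vertex: given two `k`-sets meeting in `k - δ'` elements, there is a `k`-set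
meeting each of them in exactly `i` elements. -/
lemma patch_exists {v k i δ' : ℕ} [Fintype α] (hcard : Fintype.card α = v)
    (X Y : Finset α) (hX : X.card = k) (hY : Y.card = k)
    (hm : (X ∩ Y).card = k - δ') (hδk : δ' ≤ k) (hδd : δ' ≤ k - i) (hik : i ≤ k)
    (hcap : 2 * k + δ' ≤ v + i + min i δ') :
    ∃ B : Finset α, B.card = k ∧ (B ∩ X).card = i ∧ (B ∩ Y).card = i := by
  set b := min i δ' with hb
  set a := i - b with ha
  set c' := k - i - b with hc'
  have hb1 : b ≤ i := min_le_left _ _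
  have hb2 : b ≤ δ' := min_le_right _ _
  have hb3 : b = i ∨ b = δ' := by
    rcases le_total i δ' with h | h
    · left; rw [hb, min_eq_left h]
    · right; rw [hb, min_eq_right h]
  have hXY : (X \ Y).card = δ' := by
    have := card_inter_add_card_sdiff X Y
    omega
  have hYX : (Y \ X).card = δ' := by
    have := card_inter_add_card_sdiff Y X
    rw [inter_comm] at this
    omega
  have hO : ((X ∪ Y)ᶜ).card = v - (k + δ') := by
    have h1 := card_union_add_card_inter X Y
    have h2 := card_compl (X ∪ Y)
    omega
  obtain ⟨S1, hS1sub, hS1⟩ := exists_subset_card_eq (show a ≤ (X ∩ Y).card by omega)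
  obtain ⟨S2, hS2sub, hS2⟩ := exists_subset_card_eq (show b ≤ (X \ Y).card by omega)
  obtain ⟨S3, hS3sub, hS3⟩ := exists_subset_card_eq (show b ≤ (Y \ X).card by omega)
  obtain ⟨S4, hS4sub, hS4⟩ := exists_subset_card_eq
    (show c' ≤ ((X ∪ Y)ᶜ).card by omega)
  -- region disjointness
  have dXY_XdY : Disjoint (X ∩ Y) (X \ Y) := by
    rw [Finset.disjoint_left]; intro a h1 h2; simp only [mem_inter, mem_sdiff] at *; tauto
  have dXY_YdX : Disjoint (X ∩ Y) (Y \ X) := by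
    rw [Finset.disjoint_left]; intro a h1 h2; simp only [mem_inter, mem_sdiff] at *; tauto
  have dXdY_YdX : Disjoint (X \ Y) (Y \ X) := by
    rw [Finset.disjoint_left]; intro a h1 h2; simp only [mem_sdiff] at *; tauto
  have dC : ∀ S, S ⊆ X ∪ Y → Disjoint S ((X ∪ Y)ᶜ) := fun S hS =>
    disjoint_compl_right.mono_left hS
  have d12 : Disjoint S1 S2 := dXY_XdY.mono hS1sub hS2sub
  have d13 : Disjoint S1 S3 := dXY_YdX.mono hS1sub hS3sub
  have d23 : Disjoint S2 S3 := dXdY_YdX.mono hS2sub hS3sub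
  have d14 : Disjoint S1 S4 :=
    (dC (X ∩ Y) (inter_subset_left.trans subset_union_left)).mono hS1sub hS4sub
  have d24 : Disjoint S2 S4 :=
    (dC (X \ Y) (sdiff_subset.trans subset_union_left)).mono hS2sub hS4sub
  have d34 : Disjoint S3 S4 :=
    (dC (Y \ X) (sdiff_subset.trans subset_union_right)).mono hS3sub hS4sub
  refine ⟨S1 ∪ S2 ∪ S3 ∪ S4, ?_, ?_, ?_⟩
  · have hc1 : (S1 ∪ S2).card = a + b := by
      rw [card_union_of_disjoint d12, hS1, hS2]
    have hc2 : (S1 ∪ S2 ∪ S3).card = a + b + b := by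
      rw [card_union_of_disjoint (disjoint_union_left.2 ⟨d13, d23⟩), hc1, hS3]
    have hc3 : (S1 ∪ S2 ∪ S3 ∪ S4).card = a + b + b + c' := by
      rw [card_union_of_disjoint
        (disjoint_union_left.2 ⟨disjoint_union_left.2 ⟨d14, d24⟩, d34⟩), hc2, hS4]
    rw [hc3]
    omega
  · have hBX : (S1 ∪ S2 ∪ S3 ∪ S4) ∩ X = S1 ∪ S2 := by
      have e1 : S1 ∩ X = S1 := inter_eq_left.2
        (hS1sub.trans (inter_subset_left))
      have e2 : S2 ∩ X = S2 := inter_eq_left.2 (hS2sub.trans (sdiff_subset))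
      have e3 : S3 ∩ X = ∅ := by
        rw [← disjoint_iff_inter_eq_empty]
        rw [Finset.disjoint_left]
        intro p hp hpx
        have := hS3sub hp
        simp only [mem_sdiff] at this
        tauto
      have e4 : S4 ∩ X = ∅ := by
        rw [← disjoint_iff_inter_eq_empty]
        exact (disjoint_compl_left.mono_left hS4sub).mono_right subset_union_left
      rw [union_inter_distrib_right, union_inter_distrib_right, union_inter_distrib_right,
        e1, e2, e3, e4, union_empty, union_empty]
    rw [hBX, card_union_of_disjoint d12, hS1, hS2]
    omega
  · have hBY : (S1 ∪ S2 ∪ S3 ∪ S4) ∩ Y = S1 ∪ S3 := by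
      have e1 : S1 ∩ Y = S1 := inter_eq_left.2 (hS1sub.trans (inter_subset_right))
      have e2 : S2 ∩ Y = ∅ := by
        rw [← disjoint_iff_inter_eq_empty]
        rw [Finset.disjoint_left]
        intro p hp hpy
        have := hS2sub hp
        simp only [mem_sdiff] at this
        tauto
      have e3 : S3 ∩ Y = S3 := inter_eq_left.2 (hS3sub.trans (sdiff_subset))
      have e4 : S4 ∩ Y = ∅ := by
        rw [← disjoint_iff_inter_eq_empty]
        exact (disjoint_compl_left.mono_left hS4sub).mono_right subset_union_right
      rw [union_inter_distrib_right, union_inter_distrib_right, union_inter_distrib_right,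
        e1, e2, e3, e4, union_empty, union_empty]
    rw [hBY, card_union_of_disjoint d13, hS1, hS3]
    omega



variable {v k : ℕ}

/-- The arc of length `k` starting at position `a` on the circle `Fin v`. -/
def arcF (v k : ℕ) (hv0 : 0 < v) (a : ℕ) : Finset (Fin v) :=
  (Finset.range k).image (fun t => ⟨(a + t) % v, Nat.mod_lt _ hv0⟩)

lemma arcF_injOn (hv0 : 0 < v) (a : ℕ) (hk : k ≤ v) :
    Set.InjOn (fun t => (⟨(a + t) % v, Nat.mod_lt _ hv0⟩ : Fin v)) (Finset.range k) := by
  intro t1 h1 t2 h2 heq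
  simp only [coe_range, Set.mem_Iio] at h1 h2
  have hval : (a + t1) % v = (a + t2) % v := congrArg Fin.val heq
  have hmod : t1 % v = t2 % v := Nat.ModEq.add_left_cancel' a hval
  rw [Nat.mod_eq_of_lt (by omega), Nat.mod_eq_of_lt (by omega)] at hmod
  exact hmod

lemma card_arcF (hv0 : 0 < v) (a : ℕ) (hk : k ≤ v) : (arcF v k hv0 a).card = k := by
  rw [arcF, card_image_of_injOn (arcF_injOn hv0 a hk), card_range]

lemma arcF_mod (hv0 : 0 < v) (a : ℕ) : arcF v k hv0 a = arcF v k hv0 (a % v) := by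
  unfold arcF
  congr 1
  funext t
  exact Fin.ext (by simp [Nat.mod_add_mod])

lemma arcF_inter (hv0 : 0 < v) (a σ : ℕ) (hσ0 : 0 < σ) (hσk : σ ≤ k) (hσv : σ + k ≤ v) :
    (arcF v k hv0 a ∩ arcF v k hv0 (a + σ)).card = k - σ := by
  have hkv : k ≤ v := by omega
  have hset : arcF v k hv0 a ∩ arcF v k hv0 (a + σ)
      = (Finset.Ico σ k).image (fun t => ⟨(a + t) % v, Nat.mod_lt _ hv0⟩) := by
    ext x
    simp only [arcF, mem_inter, mem_image, mem_range, mem_Ico]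
    constructor
    · rintro ⟨⟨t, ht, hxt⟩, ⟨s, hs, hxs⟩⟩
      refine ⟨t, ⟨?_, ht⟩, hxt⟩
      rw [← hxs] at hxt
      have hval : (a + (σ + s)) % v = (a + t) % v := by
        have := congrArg Fin.val hxt
        simp only [] at this
        rw [← Nat.add_assoc]
        exact this.symm
      have hmod : (σ + s) % v = t % v := Nat.ModEq.add_left_cancel' a hval
      rw [Nat.mod_eq_of_lt (by omega), Nat.mod_eq_of_lt (by omega)] at hmod
      omega
    · rintro ⟨t, ⟨hσt, htk⟩, hxt⟩
      refine ⟨⟨t, htk, hxt⟩, ⟨t - σ, by omega, ?_⟩⟩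
      rw [← hxt]
      exact Fin.ext (by simp only []; congr 1; omega)
  rw [hset, card_image_of_injOn, Nat.card_Ico]
  intro t1 h1 t2 h2 heq
  simp only [coe_Ico, Set.mem_Ico] at h1 h2
  exact arcF_injOn hv0 a hkv (by simp; omega) (by simp; omega) heq

lemma adj_intro {v k i : ℕ} (hik : i < k) (A B : {A : Finset (Fin v) // A.card = k})
    (h : (A.1 ∩ B.1).card = i) : (genJohnsonGraph v k i).Adj A B := by
  refine ⟨fun he => ?_, h⟩
  rw [he, Finset.inter_self, B.2] at h
  omega

lemma lower_bound {v k i : ℕ} (hik : i < k) (h2k : 2 * k ≤ v)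
    (hΔ : 0 < v - 2 * k + 2 * i)
    (A : {A : Finset (Fin v) // A.card = k})
    (c : (genJohnsonGraph v k i).Walk A A) (hodd : Odd c.length) :
    2 * ((k - i) ⌈/⌉ (v - 2 * k + 2 * i)) + 1 ≤ c.length := by
  set Δ := v - 2 * k + 2 * i with hΔdef
  set L := c.length with hL
  have claim : ∀ j : ℕ,
      (2 * j ≤ L → k ≤ (A.1 ∩ (c.getVert (2 * j)).1).card + j * Δ) ∧
      (2 * j + 1 ≤ L → (A.1 ∩ (c.getVert (2 * j + 1)).1).card ≤ i + j * Δ) := by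
    intro j
    induction j with
    | zero =>
      constructor
      · intro _
        have h0 : c.getVert (2 * 0) = A := by
          rw [show 2 * 0 = 0 by ring]; exact c.getVert_zero
        rw [h0, Finset.inter_self, A.2]
        omega
      · intro h1
        have hadj := c.adj_getVert_succ (i := 0) (by omega)
        rw [c.getVert_zero] at hadj
        have hedge := hadj.2
        rw [show 2 * 0 + 1 = 0 + 1 by ring]
        omega
    | succ j ih =>
      have hmul : (j + 1) * Δ = j * Δ + Δ := by ring
      have ha : 2 * (j + 1) ≤ L →
          k ≤ (A.1 ∩ (c.getVert (2 * (j + 1))).1).card + (j + 1) * Δ := by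
        intro h2
        have ih2 := ih.2 (by omega)
        have hadj := c.adj_getVert_succ (i := 2 * j + 1) (by omega)
        have hedge := hadj.2
        rw [show 2 * j + 1 + 1 = 2 * j + 2 by ring] at hedge
        have hY := (c.getVert (2 * j + 1)).2
        have hZ := (c.getVert (2 * j + 2)).2
        have hIL := ineqL A.1 (c.getVert (2 * j + 1)).1 (c.getVert (2 * j + 2)).1
        rw [Fintype.card_fin, A.2, hY, hZ] at hIL
        rw [show 2 * (j + 1) = 2 * j + 2 by ring]
        omega
      refine ⟨ha, ?_⟩
      intro h3
      have hk2 := ha (by omega)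
      have hadj := c.adj_getVert_succ (i := 2 * j + 2) (by omega)
      have hedge := hadj.2
      rw [show 2 * j + 2 + 1 = 2 * j + 3 by ring] at hedge
      have hIU := ineqU A.1 (c.getVert (2 * j + 2)).1 (c.getVert (2 * j + 3)).1
      rw [A.2] at hIU
      rw [show 2 * (j + 1) + 1 = 2 * j + 3 by ring]
      rw [show 2 * (j + 1) = 2 * j + 2 by ring] at hk2
      omega
  obtain ⟨t, hT⟩ := hodd
  have h1 := (claim t).1 (by omega)
  have hadj := c.adj_getVert_succ (i := 2 * t) (by omega)
  have hedge := hadj.2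
  rw [show 2 * t + 1 = 2 * t + 1 by ring] at hedge
  have hend : c.getVert (2 * t + 1) = A := by
    rw [show 2 * t + 1 = L by omega, hL]
    exact c.getVert_length
  rw [hend] at hedge
  have hcomm : (A.1 ∩ (c.getVert (2 * t)).1).card = i := by
    rw [Finset.inter_comm]; exact hedge
  have hd : k - i ≤ Δ * t := by
    rw [Nat.mul_comm]
    omega
  have hn := (ceilDiv_le_iff_le_mul hΔ).2 hd
  omega

lemma exists_closed_walk {v k i : ℕ} (hik : i < k) (hkv : k < v)
    (h2k : 2 * k ≤ v) (hexc : ¬(v = 2 * k ∧ i = 0)) :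
    ∃ (A : {A : Finset (Fin v) // A.card = k})
      (w : (genJohnsonGraph v k i).Walk A A),
      w.length = 2 * ((k - i) ⌈/⌉ (v - 2 * k + 2 * i)) + 1 := by
  have hv0 : 0 < v := by omega
  have hkv' : k ≤ v := by omega
  set Δ := v - 2 * k + 2 * i with hΔdef
  set d := k - i with hddef
  have hΔ0 : 0 < Δ := by omega
  have hd0 : 0 < d := by omega
  set n := d ⌈/⌉ Δ with hndef
  -- basic ceilDiv facts
  have hdnΔ : d ≤ Δ * n := by
    have := le_smul_ceilDiv (b := d) hΔ0
    simpa [smul_eq_mul] using this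
  have hn1 : 1 ≤ n := by
    by_contra hc
    have hn0 : n = 0 := by omega
    rw [hn0, Nat.mul_zero] at hdnΔ
    omega
  have hnd' : (n - 1) * Δ < d := by
    by_contra hc
    push_neg at hc
    have : d ≤ Δ * (n - 1) := by rw [Nat.mul_comm]; omega
    have h2 := (ceilDiv_le_iff_le_mul hΔ0).2 this
    omega
  set δ := d - (n - 1) * Δ with hδdef
  obtain ⟨m, hm⟩ : ∃ m, n = m + 1 := ⟨n - 1, by omega⟩
  have hmd : m * Δ < d := by
    have : (n - 1) * Δ = m * Δ := by rw [hm]; simp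
    omega
  have hmulfact : (n - 1) * Δ + Δ = n * Δ := by
    rw [hm]; simp [Nat.add_mul]
  have hnΔ : d ≤ n * Δ := by rw [Nat.mul_comm] at hdnΔ; omega
  have hδ1 : 1 ≤ δ := by omega
  have hδΔ : δ ≤ Δ := by omega
  have hδd : δ ≤ d := by omega
  have hvΔ : v = 2 * d + Δ := by omega
  have hiΔ : i ≤ Δ := by omega
  -- arcs
  have hdk : d ≤ k := by omega
  have hdkv : d + k ≤ v := by omega
  have hδkv : δ + k ≤ v := by omega
  have hstep : ∀ j : ℕ, ((arcF v k hv0 (j * d)) ∩ (arcF v k hv0 ((j + 1) * d))).card = i := by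
    intro j
    rw [show (j + 1) * d = j * d + d by ring, arcF_inter hv0 (j * d) d hd0 hdk hdkv]
    omega
  have hE : ((arcF v k hv0 0) ∩ (arcF v k hv0 δ)).card = k - δ := by
    have := arcF_inter hv0 0 δ (by omega) (by omega) hδkv
    rw [Nat.zero_add] at this
    exact this
  have hXeq : arcF v k hv0 ((2 * n - 1) * d) = arcF v k hv0 δ := by
    have hidd : (2 * n - 1) * d = (n - 1) * v + δ := by
      have h1 : m * v = 2 * (m * d) + m * Δ := by rw [hvΔ]; ring
      have h2 : (2 * n - 1) * d = 2 * (m * d) + d := by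
        rw [hm, show 2 * (m + 1) - 1 = 2 * m + 1 by omega]; ring
      have h3 : (n - 1) * v = m * v := by rw [hm]; simp
      have h4 : (n - 1) * Δ = m * Δ := by rw [hm]; simp
      omega
    rw [arcF_mod hv0 ((2 * n - 1) * d), hidd,
      show ((n - 1) * v + δ) % v = δ % v by
        rw [Nat.add_comm, Nat.add_mul_mod_self_right],
      ← arcF_mod hv0 δ]
  -- the patch vertex
  have hXY : ((arcF v k hv0 ((2 * n - 1) * d)) ∩ (arcF v k hv0 0)).card = k - δ := by
    rw [hXeq, Finset.inter_comm]
    exact hE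
  have hcap : 2 * k + δ ≤ v + i + min i δ := by
    rcases le_total i δ with h | h
    · rw [min_eq_left h]; omega
    · rw [min_eq_right h]; omega
  obtain ⟨B, hB, hBX, hBY⟩ := patch_exists (Fintype.card_fin v)
    (arcF v k hv0 ((2 * n - 1) * d)) (arcF v k hv0 0)
    (card_arcF hv0 _ hkv') (card_arcF hv0 _ hkv') hXY (by omega) (by omega) (by omega) hcap
  -- the closed walk
  set g : ℕ → {A : Finset (Fin v) // A.card = k} := fun j =>
    if j < 2 * n then ⟨arcF v k hv0 (j * d), card_arcF hv0 _ hkv'⟩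
    else if j = 2 * n then ⟨B, hB⟩
    else ⟨arcF v k hv0 0, card_arcF hv0 _ hkv'⟩ with hgdef
  have hadjg : ∀ j, j < 2 * n + 1 → (genJohnsonGraph v k i).Adj (g j) (g (j + 1)) := by
    intro j hj
    by_cases h1 : j + 1 < 2 * n
    · have hjlt : j < 2 * n := by omega
      rw [hgdef]
      simp only [if_pos hjlt, if_pos h1]
      exact adj_intro hik _ _ (hstep j)
    · by_cases h2 : j + 1 = 2 * n
      · have hjlt : j < 2 * n := by omega
        have hjval : j = 2 * n - 1 := by omega
        rw [hgdef]
        simp only [if_pos hjlt, if_neg h1, if_pos h2]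
        apply adj_intro hik
        simp only [hjval]
        rw [Finset.inter_comm]
        exact hBX
      · have hj2 : j = 2 * n := by omega
        rw [hgdef]
        simp only [if_neg (show ¬ j < 2 * n by omega), if_pos hj2,
          if_neg (show ¬ j + 1 < 2 * n by omega), if_neg (show ¬ j + 1 = 2 * n by omega)]
        exact adj_intro hik _ _ hBY
  have hend : g (2 * n + 1) = g 0 := by
    rw [hgdef]
    simp only [if_neg (show ¬ 2 * n + 1 < 2 * n by omega),
      if_neg (show ¬ 2 * n + 1 = 2 * n by omega), if_pos (show 0 < 2 * n by omega)]
    exact Subtype.ext (by rw [Nat.zero_mul])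
  refine ⟨g 0, (chainWalk g (2 * n + 1) hadjg).copy rfl hend, ?_⟩
  rw [SimpleGraph.Walk.length_copy, length_chainWalk]

end OGAux

/-- The odd girth of `J(v,k,i)` equals `2⌈(k-i)/Δ⌉ + 1`:
there is an odd cycle of that length and no shorter odd cycle. -/
theorem odd_girth_formula (v k i : ℕ) (hik : i < k) (hkv : k < v)
    (h2k : 2 * k ≤ v) (hexc : ¬(v = 2 * k ∧ i = 0)) :
    (∃ (A : {A : Finset (Fin v) // A.card = k})
      (c : (genJohnsonGraph v k i).Walk A A),
        c.IsCycle ∧ c.length = 2 * ((k - i) ⌈/⌉ (v - 2 * k + 2 * i)) + 1) ∧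
    (∀ (A : {A : Finset (Fin v) // A.card = k})
      (c : (genJohnsonGraph v k i).Walk A A),
        c.IsCycle → Odd c.length →
          2 * ((k - i) ⌈/⌉ (v - 2 * k + 2 * i)) + 1 ≤ c.length) := by
  have hΔ : 0 < v - 2 * k + 2 * i := by omega
  constructor
  · obtain ⟨A, w, hw⟩ := OGAux.exists_closed_walk hik hkv h2k hexc
    obtain ⟨x, c, hc, hcodd, hcle⟩ :=
      OGAux.exists_odd_cycle _ A w hw ⟨(k - i) ⌈/⌉ (v - 2 * k + 2 * i), rfl⟩
    have hlb := OGAux.lower_bound hik h2k hΔ x c hcodd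
    exact ⟨x, c, hc, by omega⟩
  · intro A c _ hodd
    exact OGAux.lower_bound hik h2k hΔ A c hodd
end
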